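/- Let μ be a probability measure on (0,∞), let λ > 0, and let ρ₁ < ρ₂ be real numbers such that 0 < ∫₀^∞ a^{ρ} e^{-λ a} μ(da) < ∞ for ρ ∈ {ρ₁, ρ₂}. For ρ ∈ {ρ₁, ρ₂} and x ≥ λ define the tilted probability measure μ_{ρ,x}(da) = a^{ρ} e^{-x a} μ(da) / ∫₀^∞ a^{ρ} e^{-x a} μ(da), and let ν be the probability measure on (0,∞) with Lebesgue density y ↦ y^{ρ₂-ρ₁-1} (∫₀^∞ a^{ρ₂} e^{-(λ+y) a} μ(da)) / (Γ(ρ₂-ρ₁) ∫₀^∞ a^{ρ₁} e^{-λ a} μ(da)). Then for every Borel set B ⊆ (0,∞), ∫₀^∞ μ_{ρ₂, λ+y}(B) ν(dy) = μ_{ρ₁, λ}(B); that is, the ν-mixture of the tilted laws μ_{ρ₂, λ+y} equals μ_{ρ₁, λ}. -/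

import Mathlib

open MeasureTheory Set

lemma gammaIntegrable0 {s r : ℝ} (hs : 0 < s) (hr : 0 < r) :
    IntegrableOn (fun t : ℝ => t ^ (s - 1) * Real.exp (-(r * t))) (Set.Ioi 0) := by
  have h0 : IntegrableOn (fun x : ℝ => Real.exp (-x) * x ^ (s - 1)) (Set.Ioi 0) :=
    Real.GammaIntegral_convergent hs
  have h1 : IntegrableOn (fun x : ℝ => Real.exp (-(r * x)) * (r * x) ^ (s - 1)) (Set.Ioi 0) := by
    have := (integrableOn_Ioi_comp_mul_left_iff
      (fun x : ℝ => Real.exp (-x) * x ^ (s - 1)) 0 hr).2 (by simpa using h0)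
    simpa using this
  have h2 := h1.const_mul ((r : ℝ) ^ (s - 1))⁻¹
  refine IntegrableOn.congr_fun h2 (fun x hx => ?_) measurableSet_Ioi
  have hx0 : (0:ℝ) < x := hx
  have hrp : (0:ℝ) < r ^ (s - 1) := Real.rpow_pos_of_pos hr _
  rw [Real.mul_rpow hr.le hx0.le]
  field_simp

/-- **Proposition 1 (transfer identity).** For a probability measure `μ` on `(0,∞)`,
`λ > 0`, `ρ₁ < ρ₂` with finite positive tilting integrals, the `ν`-mixture of the
`(ρ₂, λ+y)`-tilted laws equals the `(ρ₁, λ)`-tilted law, where `ν` has the indicated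
Lebesgue density on `(0,∞)`.  The value of the `(ρ, x)`-tilted law on a Borel set `B` is
`(∫_B a^ρ e^{-x a} μ(da)) / (∫ a^ρ e^{-x a} μ(da))`. -/
theorem stmt0 (μ : Measure ℝ) [IsProbabilityMeasure μ] (hμ : μ (Set.Iic 0) = 0)
    (lam ρ₁ ρ₂ : ℝ) (hlam : 0 < lam) (hρ : ρ₁ < ρ₂)
    (h₁pos : 0 < ∫ a, a ^ ρ₁ * Real.exp (-lam * a) ∂μ)
    (h₁int : Integrable (fun a => a ^ ρ₁ * Real.exp (-lam * a)) μ)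
    (h₂pos : 0 < ∫ a, a ^ ρ₂ * Real.exp (-lam * a) ∂μ)
    (h₂int : Integrable (fun a => a ^ ρ₂ * Real.exp (-lam * a)) μ)
    (B : Set ℝ) (hB : MeasurableSet B) (hBsub : B ⊆ Set.Ioi 0) :
    ∫ y in Set.Ioi (0 : ℝ),
        (y ^ (ρ₂ - ρ₁ - 1) * (∫ a, a ^ ρ₂ * Real.exp (-(lam + y) * a) ∂μ) /
            (Real.Gamma (ρ₂ - ρ₁) * ∫ a, a ^ ρ₁ * Real.exp (-lam * a) ∂μ)) *
          ((∫ a in B, a ^ ρ₂ * Real.exp (-(lam + y) * a) ∂μ) /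
            ∫ a, a ^ ρ₂ * Real.exp (-(lam + y) * a) ∂μ)
      = (∫ a in B, a ^ ρ₁ * Real.exp (-lam * a) ∂μ) /
          ∫ a, a ^ ρ₁ * Real.exp (-lam * a) ∂μ := by
  have hs : 0 < ρ₂ - ρ₁ := sub_pos.2 hρ
  set s : ℝ := ρ₂ - ρ₁ with hs_def
  have hΓ : 0 < Real.Gamma s := Real.Gamma_pos_of_pos hs
  -- a.e. positivity of a
  have haepos : ∀ᵐ a ∂μ, 0 < a := by
    rw [ae_iff]
    convert hμ using 2
    ext a; simp [not_lt]
  -- integrability of the tilted integrand for y ≥ 0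
  have hint : ∀ y : ℝ, 0 ≤ y →
      Integrable (fun a : ℝ => a ^ ρ₂ * Real.exp (-(lam + y) * a)) μ := by
    intro y hy
    refine h₂int.mono'
      ((by fun_prop : Measurable fun a : ℝ => a ^ ρ₂ * Real.exp (-(lam + y) * a)).aestronglyMeasurable)
      (haepos.mono fun a ha => ?_)
    have h1 : a ^ ρ₂ * Real.exp (-(lam + y) * a) ≤ a ^ ρ₂ * Real.exp (-lam * a) := by
      have : -(lam + y) * a ≤ -lam * a := by nlinarith
      exact mul_le_mul_of_nonneg_left (Real.exp_le_exp.2 this) (Real.rpow_pos_of_pos ha _).le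
    have h0 : 0 ≤ a ^ ρ₂ * Real.exp (-(lam + y) * a) := by positivity
    rw [Real.norm_eq_abs, abs_of_nonneg h0]
    exact h1
  -- positivity of the normalizing constant for y ≥ 0
  have hZpos : ∀ y : ℝ, 0 ≤ y →
      0 < ∫ a, a ^ ρ₂ * Real.exp (-(lam + y) * a) ∂μ := by
    intro y hy
    have hfpos : ∀ᵐ a ∂μ, 0 < a ^ ρ₂ * Real.exp (-(lam + y) * a) :=
      haepos.mono fun a ha => by positivity
    refine (integral_pos_iff_support_of_nonneg_ae (hfpos.mono fun a h => h.le)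
      (hint y hy)).2 ?_
    by_contra h
    push_neg at h
    have hsupp0 : μ (Function.support fun a : ℝ => a ^ ρ₂ * Real.exp (-(lam + y) * a)) = 0 :=
      le_antisymm h zero_le
    have hcompl : μ (Function.support (fun a : ℝ => a ^ ρ₂ * Real.exp (-(lam + y) * a)))ᶜ = 0 := by
      refine measure_mono_null ?_ (ae_iff.1 hfpos)
      intro a ha
      simp only [mem_compl_iff, Function.mem_support, not_not] at ha
      simp only [mem_setOf_eq, not_lt]
      exact le_of_eq ha
    have : (1 : ENNReal) = 0 := by
      have huniv := measure_univ (μ := μ)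
      have hle : μ Set.univ ≤ 0 := by
        rw [← Set.union_compl_self
          (Function.support (fun a : ℝ => a ^ ρ₂ * Real.exp (-(lam + y) * a)))]
        calc μ _ ≤ _ + _ := measure_union_le _ _
          _ = 0 := by rw [hsupp0, hcompl, add_zero]
      rw [huniv] at hle
      exact le_antisymm hle zero_le
    simp at this
  -- the key Fubini computation
  have hkey : ∫ y in Set.Ioi (0 : ℝ),
      y ^ (s - 1) * ∫ a in B, a ^ ρ₂ * Real.exp (-(lam + y) * a) ∂μ
      = Real.Gamma s * ∫ a in B, a ^ ρ₁ * Real.exp (-lam * a) ∂μ := by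
    -- a.e. positivity over μ.restrict B
    have haeB : ∀ᵐ a ∂(μ.restrict B), 0 < a :=
      (ae_restrict_mem hB).mono fun a ha => hBsub ha
    -- inner Gamma integral for fixed a > 0
    have hinner : ∀ a : ℝ, 0 < a →
        (∫ y in Set.Ioi (0 : ℝ), y ^ (s - 1) * (a ^ ρ₂ * Real.exp (-(lam + y) * a)))
          = Real.Gamma s * (a ^ ρ₁ * Real.exp (-lam * a)) := by
      intro a ha
      have hcong : ∀ y ∈ Set.Ioi (0:ℝ),
          y ^ (s - 1) * (a ^ ρ₂ * Real.exp (-(lam + y) * a))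
            = (a ^ ρ₂ * Real.exp (-lam * a)) * (y ^ (s - 1) * Real.exp (-(a * y))) := by
        intro y hy
        have : -(lam + y) * a = -lam * a + -(a * y) := by ring
        rw [this, Real.exp_add]
        ring
      rw [setIntegral_congr_fun measurableSet_Ioi hcong, integral_const_mul,
        Real.integral_rpow_mul_exp_neg_mul_Ioi hs ha]
      have h1 : (1 / a) ^ s = a ^ (-s) := by
        rw [one_div, Real.inv_rpow ha.le, ← Real.rpow_neg ha.le]
      have h2 : a ^ ρ₂ * a ^ (-s) = a ^ ρ₁ := by
        rw [← Real.rpow_add ha]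
        congr 1
        simp [hs_def]
      rw [h1]
      calc a ^ ρ₂ * Real.exp (-lam * a) * (a ^ (-s) * Real.Gamma s)
          = (a ^ ρ₂ * a ^ (-s)) * Real.exp (-lam * a) * Real.Gamma s := by ring
        _ = Real.Gamma s * (a ^ ρ₁ * Real.exp (-lam * a)) := by rw [h2]; ring
    -- integrability on the product space
    have hprod : Integrable
        (Function.uncurry fun y a : ℝ => y ^ (s - 1) * (a ^ ρ₂ * Real.exp (-(lam + y) * a)))
        ((volume.restrict (Set.Ioi 0)).prod (μ.restrict B)) := by
      rw [integrable_prod_iff']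
      · constructor
        · refine haeB.mono fun a ha => ?_
          have base := (gammaIntegrable0 hs ha).const_mul (a ^ ρ₂ * Real.exp (-lam * a))
          refine IntegrableOn.congr_fun base (fun y hy => ?_) measurableSet_Ioi
          simp only [Function.uncurry]
          have : -(lam + y) * a = -lam * a + -(a * y) := by ring
          rw [this, Real.exp_add]
          ring
        · have heq : ∀ᵐ a ∂(μ.restrict B),
              (∫ y in Set.Ioi (0:ℝ),
                ‖y ^ (s - 1) * (a ^ ρ₂ * Real.exp (-(lam + y) * a))‖)
                = Real.Gamma s * (a ^ ρ₁ * Real.exp (-lam * a)) := by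
            refine haeB.mono fun a ha => ?_
            rw [← hinner a ha]
            refine setIntegral_congr_fun measurableSet_Ioi fun y hy => ?_
            have hy0 : (0:ℝ) < y := hy
            rw [Real.norm_eq_abs, abs_of_nonneg (by positivity)]
          refine (Integrable.congr ((h₁int.restrict (s := B)).const_mul (Real.Gamma s)) ?_)
          exact heq.mono fun a ha => ha.symm
      · exact (by fun_prop :
          Measurable (Function.uncurry fun y a : ℝ =>
            y ^ (s - 1) * (a ^ ρ₂ * Real.exp (-(lam + y) * a)))).aestronglyMeasurable
    have hswap := integral_integral_swap (f := fun y a : ℝ =>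
      y ^ (s - 1) * (a ^ ρ₂ * Real.exp (-(lam + y) * a))) hprod
    calc ∫ y in Set.Ioi (0 : ℝ), y ^ (s - 1) * ∫ a in B, a ^ ρ₂ * Real.exp (-(lam + y) * a) ∂μ
        = ∫ y in Set.Ioi (0 : ℝ), ∫ a in B,
            y ^ (s - 1) * (a ^ ρ₂ * Real.exp (-(lam + y) * a)) ∂μ := by
          refine setIntegral_congr_fun measurableSet_Ioi fun y hy => ?_
          rw [integral_const_mul]
      _ = ∫ a in B, (∫ y in Set.Ioi (0:ℝ),
            y ^ (s - 1) * (a ^ ρ₂ * Real.exp (-(lam + y) * a))) ∂μ := by exact hswap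
      _ = ∫ a in B, Real.Gamma s * (a ^ ρ₁ * Real.exp (-lam * a)) ∂μ := by
          refine integral_congr_ae (haeB.mono fun a ha => ?_)
          exact hinner a ha
      _ = Real.Gamma s * ∫ a in B, a ^ ρ₁ * Real.exp (-lam * a) ∂μ := integral_const_mul _ _
  -- simplify the integrand and conclude
  set Z₁ : ℝ := ∫ a, a ^ ρ₁ * Real.exp (-lam * a) ∂μ with hZ₁
  have hsimp : ∀ y ∈ Set.Ioi (0:ℝ),
      (y ^ (s - 1) * (∫ a, a ^ ρ₂ * Real.exp (-(lam + y) * a) ∂μ) /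
          (Real.Gamma s * Z₁)) *
        ((∫ a in B, a ^ ρ₂ * Real.exp (-(lam + y) * a) ∂μ) /
          ∫ a, a ^ ρ₂ * Real.exp (-(lam + y) * a) ∂μ)
        = (Real.Gamma s * Z₁)⁻¹ *
            (y ^ (s - 1) * ∫ a in B, a ^ ρ₂ * Real.exp (-(lam + y) * a) ∂μ) := by
    intro y hy
    have hy0 : (0:ℝ) < y := hy
    have hZ := (hZpos y hy0.le).ne'
    set Z : ℝ := ∫ a, a ^ ρ₂ * Real.exp (-(lam + y) * a) ∂μ with hZdef
    set IB : ℝ := ∫ a in B, a ^ ρ₂ * Real.exp (-(lam + y) * a) ∂μ with hIBdef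
    field_simp
  rw [setIntegral_congr_fun measurableSet_Ioi hsimp, integral_const_mul, hkey]
  field_simp
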